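/- For every integer m ≥ 1, every radius r > 0 and every integer L ≥ 1, the closed Euclidean ball B̄(0, r) ⊂ ℝ^m can be partitioned into L pairwise disjoint measurable sets V₁, …, V_L whose union is B̄(0, r) and such that each V_ℓ has diameter at most 6 r L^{−1/m}. -/

import Mathlib

open Metric MeasureTheory Set
open scoped ENNReal

private lemma pack_bound (m : ℕ) (r ε : ℝ) (hr : 0 < r) (hε : 0 < ε)
    (s : Finset (EuclideanSpace ℝ (Fin m)))
    (hs : ∀ x ∈ s, x ∈ closedBall (0 : EuclideanSpace ℝ (Fin m)) r)
    (hsep : ∀ x ∈ s, ∀ y ∈ s, x ≠ y → ε ≤ dist x y) :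
    (s.card : ℝ) * (ε / 2) ^ m ≤ (r + ε / 2) ^ m := by
  have hdisj : (s : Set (EuclideanSpace ℝ (Fin m))).Pairwise
      (Function.onFun Disjoint fun x => ball x (ε / 2)) := by
    intro x hx y hy hxy
    exact ball_disjoint_ball (by linarith [hsep x hx y hy hxy])
  have hU : volume (⋃ x ∈ s, ball x (ε / 2)) = ∑ x ∈ s, volume (ball x (ε / 2)) :=
    measure_biUnion_finset hdisj fun x _ => measurableSet_ball
  have hsub : (⋃ x ∈ s, ball x (ε / 2)) ⊆ ball (0 : EuclideanSpace ℝ (Fin m)) (r + ε / 2) := by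
    refine Set.iUnion₂_subset fun x hx => ball_subset_ball' ?_
    have := mem_closedBall.1 (hs x hx)
    linarith
  have hfr : Module.finrank ℝ (EuclideanSpace ℝ (Fin m)) = m := finrank_euclideanSpace_fin
  have key : (s.card : ℝ≥0∞) * ENNReal.ofReal ((ε / 2) ^ m) *
      volume (ball (0 : EuclideanSpace ℝ (Fin m)) 1) ≤
      ENNReal.ofReal ((r + ε / 2) ^ m) * volume (ball (0 : EuclideanSpace ℝ (Fin m)) 1) := by
    calc (s.card : ℝ≥0∞) * ENNReal.ofReal ((ε / 2) ^ m) *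
        volume (ball (0 : EuclideanSpace ℝ (Fin m)) 1)
        = ∑ _x ∈ s, ENNReal.ofReal ((ε / 2) ^ m) *
            volume (ball (0 : EuclideanSpace ℝ (Fin m)) 1) := by
          rw [Finset.sum_const, nsmul_eq_mul, mul_assoc]
      _ = ∑ x ∈ s, volume (ball x (ε / 2)) := by
          refine Finset.sum_congr rfl fun x _ => ?_
          rw [Measure.addHaar_ball_of_pos volume x (by linarith : (0:ℝ) < ε / 2), hfr]
      _ = volume (⋃ x ∈ s, ball x (ε / 2)) := hU.symm
      _ ≤ volume (ball (0 : EuclideanSpace ℝ (Fin m)) (r + ε / 2)) := measure_mono hsub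
      _ = ENNReal.ofReal ((r + ε / 2) ^ m) *
          volume (ball (0 : EuclideanSpace ℝ (Fin m)) 1) := by
          rw [Measure.addHaar_ball_of_pos volume _ (by linarith : (0:ℝ) < r + ε / 2), hfr]
  have hc0 : volume (ball (0 : EuclideanSpace ℝ (Fin m)) 1) ≠ 0 :=
    (measure_ball_pos volume _ one_pos).ne'
  have hct : volume (ball (0 : EuclideanSpace ℝ (Fin m)) 1) ≠ ⊤ := measure_ball_lt_top.ne
  rw [ENNReal.mul_le_mul_iff_left hc0 hct] at key
  have h1 : ((s.card : ℝ≥0∞) * ENNReal.ofReal ((ε / 2) ^ m)) =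
      ENNReal.ofReal ((s.card : ℝ) * (ε / 2) ^ m) := by
    rw [ENNReal.ofReal_mul (by positivity), ENNReal.ofReal_natCast]
  rw [h1] at key
  exact (ENNReal.ofReal_le_ofReal_iff (by positivity)).1 key

private lemma exists_net (m : ℕ) (r ε : ℝ) (hr : 0 < r) (hε : 0 < ε) :
    ∃ s : Finset (EuclideanSpace ℝ (Fin m)),
      (∀ x ∈ s, x ∈ closedBall (0 : EuclideanSpace ℝ (Fin m)) r) ∧
      (∀ x ∈ s, ∀ y ∈ s, x ≠ y → ε ≤ dist x y) ∧
      (s.card : ℝ) * (ε / 2) ^ m ≤ (r + ε / 2) ^ m ∧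
      ∀ x ∈ closedBall (0 : EuclideanSpace ℝ (Fin m)) r, ∃ y ∈ s, dist x y < ε := by
  classical
  set P : Finset (EuclideanSpace ℝ (Fin m)) → Prop := fun s =>
    (∀ x ∈ s, x ∈ closedBall (0 : EuclideanSpace ℝ (Fin m)) r) ∧
    (∀ x ∈ s, ∀ y ∈ s, x ≠ y → ε ≤ dist x y) with hP
  have hbdd : ∀ s, P s → s.card ≤ ⌈(r + ε / 2) ^ m / (ε / 2) ^ m⌉₊ := by
    intro s hs
    have h1 := pack_bound m r ε hr hε s hs.1 hs.2
    have h2 : (s.card : ℝ) ≤ (r + ε / 2) ^ m / (ε / 2) ^ m := by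
      rw [le_div_iff₀ (by positivity)]; exact h1
    exact_mod_cast h2.trans (Nat.le_ceil _)
  set C : Set ℕ := {n | ∃ s, P s ∧ s.card = n} with hC
  have hne : 0 ∈ C := ⟨∅, ⟨by simp, by simp⟩, rfl⟩
  have hCb : BddAbove C := ⟨⌈(r + ε / 2) ^ m / (ε / 2) ^ m⌉₊, by
    rintro n ⟨s, hs, rfl⟩; exact hbdd s hs⟩
  obtain ⟨s, hPs, hcard⟩ := Nat.sSup_mem ⟨0, hne⟩ hCb
  refine ⟨s, hPs.1, hPs.2, ?_, ?_⟩
  · have h1 := pack_bound m r ε hr hε s hPs.1 hPs.2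
    exact h1
  · intro x hx
    by_contra hcon
    push_neg at hcon
    have hxs : x ∉ s := fun hxs => absurd (hcon x hxs) (by simp [hε])
    have hP' : P (insert x s) := by
      constructor
      · intro y hy
        rcases Finset.mem_insert.1 hy with rfl | hy
        · exact hx
        · exact hPs.1 y hy
      · intro a ha b hb hab
        rcases Finset.mem_insert.1 ha with h1 | h1
        · rcases Finset.mem_insert.1 hb with h2 | h2
          · exact absurd (h1.trans h2.symm) hab
          · rw [h1]; exact hcon b h2
        · rcases Finset.mem_insert.1 hb with h2 | h2
          · rw [h2, dist_comm]; exact hcon a h1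
          · exact hPs.2 a h1 b h2 hab
    have : s.card + 1 ≤ sSup C := by
      rw [← Finset.card_insert_of_notMem hxs]
      exact le_csSup hCb ⟨insert x s, hP', rfl⟩
    omega

/-- The closed Euclidean ball of radius `r` in `ℝ^m` can be partitioned into `L` pairwise
disjoint measurable sets, each of diameter at most `6 r L^{-1/m}`. -/
theorem closedBall_partition_small_diameter (m : ℕ) (hm : 1 ≤ m) (r : ℝ) (hr : 0 < r)
    (L : ℕ) (hL : 1 ≤ L) :
    ∃ V : Fin L → Set (EuclideanSpace ℝ (Fin m)),
      (∀ i, MeasurableSet (V i)) ∧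
      (Pairwise fun i j => Disjoint (V i) (V j)) ∧
      (⋃ i, V i) = Metric.closedBall (0 : EuclideanSpace ℝ (Fin m)) r ∧
      ∀ i, Metric.diam (V i) ≤ 6 * r * (L : ℝ) ^ (-(1:ℝ) / m) := by
  classical
  have hL0 : (0 : ℝ) < L := by exact_mod_cast hL
  have hm0 : (m : ℝ) ≠ 0 := Nat.cast_ne_zero.2 (by omega)
  set t : ℝ := (L : ℝ) ^ (-(1:ℝ) / m) with ht_def
  have ht : 0 < t := Real.rpow_pos_of_pos hL0 _
  set ε : ℝ := 3 * r * t with hε_def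
  have hε : 0 < ε := by positivity
  have htinv : t⁻¹ = (L : ℝ) ^ ((1:ℝ) / m) := by
    rw [ht_def, ← Real.rpow_neg hL0.le]
    congr 1
    ring
  have hLpow : ((L : ℝ) ^ ((1:ℝ) / m)) ^ m = (L : ℝ) := by
    rw [← Real.rpow_natCast ((L : ℝ) ^ ((1:ℝ) / m)) m, ← Real.rpow_mul hL0.le,
      one_div, inv_mul_cancel₀ hm0, Real.rpow_one]
  by_cases hcase : ε ≤ r
  · -- main case
    obtain ⟨s, hsb, hsep, hpk, hnet⟩ := exists_net m r ε hr hε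
    have hcard : s.card ≤ L := by
      have h1 : (s.card : ℝ) ≤ ((r + ε / 2) / (ε / 2)) ^ m := by
        rw [div_pow, le_div_iff₀ (by positivity)]
        exact hpk
      have h2 : (r + ε / 2) / (ε / 2) ≤ 3 * r / ε := by
        rw [div_le_div_iff₀ (by positivity) hε]
        nlinarith
      have h3 : 3 * r / ε = (L : ℝ) ^ ((1:ℝ) / m) := by
        rw [hε_def, ← htinv]
        field_simp
      have h4 : (s.card : ℝ) ≤ (L : ℝ) := by
        calc (s.card : ℝ) ≤ ((r + ε / 2) / (ε / 2)) ^ m := h1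
          _ ≤ (3 * r / ε) ^ m := by
              apply pow_le_pow_left₀ (by positivity) h2
          _ = (L : ℝ) := by rw [h3, hLpow]
      exact_mod_cast h4
    set x : Fin s.card → EuclideanSpace ℝ (Fin m) := fun k => ((s.equivFin.symm k : s) :
      EuclideanSpace ℝ (Fin m)) with hx_def
    have hxmem : ∀ k, x k ∈ s := fun k => (s.equivFin.symm k).2
    set B : Fin L → Set (EuclideanSpace ℝ (Fin m)) := fun i =>
      if h : (i : ℕ) < s.card then ball (x ⟨i, h⟩) ε else ∅ with hB_def
    set A : Fin L → Set (EuclideanSpace ℝ (Fin m)) := fun i =>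
      closedBall (0 : EuclideanSpace ℝ (Fin m)) r ∩ B i with hA_def
    set V : Fin L → Set (EuclideanSpace ℝ (Fin m)) := fun i =>
      A i \ ⋃ j ∈ Finset.Iio i, A j with hV_def
    have hAmeas : ∀ i, MeasurableSet (A i) := by
      intro i
      apply measurableSet_closedBall.inter
      simp only [hB_def]
      split_ifs
      exacts [measurableSet_ball, MeasurableSet.empty]
    have hVsubA : ∀ i, V i ⊆ A i := fun i => Set.diff_subset
    have hVsubB : ∀ i, V i ⊆ B i := fun i a ha => (hVsubA i ha).2
    refine ⟨V, ?_, ?_, ?_, ?_⟩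
    · intro i
      exact (hAmeas i).diff (Finset.measurableSet_biUnion _ fun j _ => hAmeas j)
    · have key : ∀ i j : Fin L, i < j → Disjoint (V i) (V j) := by
        intro i j hij
        rw [Set.disjoint_left]
        intro a hai haj
        exact haj.2 (Set.mem_iUnion₂.2 ⟨i, Finset.mem_Iio.2 hij, hVsubA i hai⟩)
      intro i j hij
      rcases lt_or_gt_of_ne hij with h | h
      · exact key i j h
      · exact (key j i h).symm
    · have hAU : ∀ a, a ∈ closedBall (0 : EuclideanSpace ℝ (Fin m)) r → ∃ i, a ∈ A i := by
        intro a ha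
        obtain ⟨y, hy, hdy⟩ := hnet a ha
        set k : Fin s.card := s.equivFin ⟨y, hy⟩ with hk_def
        have hk : (k : ℕ) < s.card := k.2
        refine ⟨⟨k, lt_of_lt_of_le hk hcard⟩, ha, ?_⟩
        have hxk : x ⟨(k : ℕ), hk⟩ = y := by
          simp only [hx_def, hk_def, Fin.eta, Equiv.symm_apply_apply]
        show a ∈ B _
        simp only [hB_def]
        rw [dif_pos hk]
        rw [mem_ball, hxk]
        exact hdy
      apply Set.eq_of_subset_of_subset
      · exact Set.iUnion_subset fun i => (hVsubA i).trans Set.inter_subset_left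
      · intro a ha
        obtain ⟨i, hai⟩ := hAU a ha
        set T : Finset (Fin L) := Finset.univ.filter (fun j => a ∈ A j) with hT_def
        have hTne : T.Nonempty := ⟨i, by simp [hT_def, hai]⟩
        set i0 := T.min' hTne with hi0_def
        have hi0 : a ∈ A i0 := (Finset.mem_filter.1 (T.min'_mem hTne)).2
        refine Set.mem_iUnion.2 ⟨i0, hi0, ?_⟩
        intro hmem
        obtain ⟨j, hj, haj⟩ := Set.mem_iUnion₂.1 hmem
        have hji : j < i0 := Finset.mem_Iio.1 hj
        have : i0 ≤ j := T.min'_le j (by simp [hT_def, haj])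
        exact absurd hji (not_lt.2 this)
    · intro i
      by_cases h : (i : ℕ) < s.card
      · have hsub : V i ⊆ ball (x ⟨i, h⟩) ε := by
          intro a ha
          have := hVsubB i ha
          simp only [hB_def] at this
          rwa [dif_pos h] at this
        calc diam (V i) ≤ diam (ball (x ⟨(i : ℕ), h⟩) ε) := diam_mono hsub isBounded_ball
          _ ≤ 2 * ε := diam_ball hε.le
          _ = 6 * r * t := by rw [hε_def]; ring
      · have hsub : V i ⊆ ∅ := by
          intro a ha
          have := hVsubB i ha
          simp only [hB_def] at this
          rwa [dif_neg h] at this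
        rw [Set.subset_empty_iff.1 hsub, diam_empty]
        positivity
  · -- trivial case: ε > r
    push_neg at hcase
    have h2r : 2 * r ≤ 6 * r * t := by nlinarith
    refine ⟨fun i => if i = ⟨0, hL⟩ then closedBall (0 : EuclideanSpace ℝ (Fin m)) r else ∅,
      ?_, ?_, ?_, ?_⟩
    · intro i
      dsimp only
      split_ifs
      exacts [measurableSet_closedBall, MeasurableSet.empty]
    · intro i j hij
      dsimp only
      split_ifs with h1 h2
      · exact absurd (h1.trans h2.symm) hij
      · simp
      · simp
      · simp
    · apply Set.eq_of_subset_of_subset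
      · refine Set.iUnion_subset fun i => ?_
        split_ifs
        · exact subset_rfl
        · exact Set.empty_subset _
      · intro a ha
        exact Set.mem_iUnion.2 ⟨⟨0, hL⟩, by simp [ha]⟩
    · intro i
      dsimp only
      split_ifs
      · exact (diam_closedBall hr.le).trans h2r
      · rw [diam_empty]; positivity
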